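/- The function u(ξ,η,ζ) = ξζ(ξ+ζ−1)(η+ζ−1)/(1−ζ) belongs to H¹(Ω) in the following sense: u is differentiable at every point of the interior Ω° of Ω (where ζ < 1), the function u² is Lebesgue-integrable over Ω°, and the squared Euclidean norm of the gradient of u is Lebesgue-integrable over Ω°. -/

import Mathlib

open MeasureTheory

noncomputable section

/-- The reference pyramid `Ω = {ξ,η,ζ ≥ 0, ξ ≤ 1−ζ, η ≤ 1−ζ}` inside `ℝ³`
(as Euclidean space, so that norms are Euclidean). -/
def Pyr : Set (EuclideanSpace ℝ (Fin 3)) :=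
  {p | 0 ≤ p 0 ∧ 0 ≤ p 1 ∧ 0 ≤ p 2 ∧ p 0 ≤ 1 - p 2 ∧ p 1 ≤ 1 - p 2}

/-- `u(ξ,η,ζ) = ξζ(ξ+ζ−1)(η+ζ−1)/(1−ζ)`. -/
def uFun : EuclideanSpace ℝ (Fin 3) → ℝ :=
  fun p => p 0 * p 2 * (p 0 + p 2 - 1) * (p 1 + p 2 - 1) / (1 - p 2)

namespace UFunAux

abbrev E3 := EuclideanSpace ℝ (Fin 3)
abbrev P (i : Fin 3) : E3 →L[ℝ] ℝ := EuclideanSpace.proj i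

def c0 (x : E3) : ℝ := x 2 * (x 1 + x 2 - 1) * (2*x 0 + x 2 - 1) / (1 - x 2)
def c1 (x : E3) : ℝ := x 0 * x 2 * (x 0 + x 2 - 1) / (1 - x 2)
def c2 (x : E3) : ℝ :=
  (x 0 * ((x 0 + x 2 - 1)*(x 1 + x 2 - 1) + x 2*(x 1 + x 2 - 1) + x 2*(x 0 + x 2 - 1)) * (1 - x 2)
    + x 0 * x 2 * (x 0 + x 2 - 1) * (x 1 + x 2 - 1)) / (1 - x 2)^2

/-- The explicit derivative of `uFun` at points where `1 - ζ ≠ 0`. -/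
lemma key (x : E3) (hne : (1:ℝ) - x 2 ≠ 0) :
    HasFDerivAt uFun (c0 x • P 0 + c1 x • P 1 + c2 x • P 2) x := by
  have h0 : HasFDerivAt (fun p : E3 => p 0) (P 0) x := (P 0).hasFDerivAt
  have h1 : HasFDerivAt (fun p : E3 => p 1) (P 1) x := (P 1).hasFDerivAt
  have h2 : HasFDerivAt (fun p : E3 => p 2) (P 2) x := (P 2).hasFDerivAt
  have hD : HasFDerivAt (fun p : E3 => 1 - p 2) ((0:E3 →L[ℝ] ℝ) - P 2) x :=
    (hasFDerivAt_const (1:ℝ) x).sub h2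
  have hinv : HasFDerivAt (fun p : E3 => (1 - p 2)⁻¹)
      ((-(((1:ℝ) - x 2) ^ 2)⁻¹) • ((0:E3 →L[ℝ] ℝ) - P 2)) x :=
    (hasDerivAt_inv hne).comp_hasFDerivAt x hD
  have hN := ((h0.mul h2).mul ((h0.add h2).sub_const 1)).mul ((h1.add h2).sub_const 1)
  have h := hN.mul hinv
  have hu : uFun = fun p : E3 => p 0 * p 2 * (p 0 + p 2 - 1) * (p 1 + p 2 - 1) * (1 - p 2)⁻¹ := by
    funext p; rw [uFun, div_eq_mul_inv]
  rw [hu]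
  refine h.congr_fderiv ?_
  ext v
  simp only [ContinuousLinearMap.add_apply, ContinuousLinearMap.smul_apply,
    ContinuousLinearMap.sub_apply, ContinuousLinearMap.zero_apply, PiLp.proj_apply,
    c0, c1, c2, smul_eq_mul]
  simp only [Pi.mul_apply, Pi.add_apply]
  field_simp
  ring

lemma bound0 {x : E3} (ha : 0 ≤ x 0) (hb : 0 ≤ x 1) (hc : 0 ≤ x 2)
    (hax : x 0 ≤ 1 - x 2) (hbx : x 1 ≤ 1 - x 2) (hd : 0 < 1 - x 2) : |c0 x| ≤ 1 := by
  rw [c0, abs_div, abs_of_pos hd, div_le_one hd]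
  have h1 : |x 2| ≤ 1 := by rw [abs_of_nonneg hc]; linarith
  have h2 : |x 1 + x 2 - 1| ≤ 1 - x 2 := by rw [abs_le]; constructor <;> linarith
  have h3 : |2*x 0 + x 2 - 1| ≤ 1 - x 2 := by rw [abs_le]; constructor <;> linarith
  rw [abs_mul, abs_mul]
  have hd1 : 1 - x 2 ≤ 1 := by linarith
  nlinarith [abs_nonneg (x 2), abs_nonneg (x 1 + x 2 - 1), abs_nonneg (2*x 0 + x 2 - 1),
    mul_le_mul h2 h3 (abs_nonneg _) (by linarith)]

lemma bound1 {x : E3} (ha : 0 ≤ x 0) (hb : 0 ≤ x 1) (hc : 0 ≤ x 2)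
    (hax : x 0 ≤ 1 - x 2) (hbx : x 1 ≤ 1 - x 2) (hd : 0 < 1 - x 2) : |c1 x| ≤ 1 := by
  rw [c1, abs_div, abs_of_pos hd, div_le_one hd]
  have h1 : |x 0 * x 2| ≤ 1 := by
    rw [abs_of_nonneg (mul_nonneg ha hc)]; nlinarith
  have h3 : |x 0 + x 2 - 1| ≤ 1 - x 2 := by rw [abs_le]; constructor <;> linarith
  rw [abs_mul]
  nlinarith [abs_nonneg (x 0 * x 2), abs_nonneg (x 0 + x 2 - 1)]

lemma aux (a c p q d : ℝ) (ha : 0 ≤ a) (had : a ≤ d) (hc : 0 ≤ c) (hc1 : c ≤ 1)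
    (hp : 0 ≤ p) (hpd : p ≤ d) (hq : 0 ≤ q) (hqd : q ≤ d) (hd : 0 < d) (hd1 : d ≤ 1) :
    |a * (p*q - c*q - c*p) * d + a*c*(p*q)| ≤ 4 * d^2 := by
  have hd0 : (0:ℝ) ≤ d := hd.le
  have s1 : a*p ≤ d*d := mul_le_mul had hpd hp (by linarith)
  have s2 : q*d ≤ d*d := mul_le_mul hqd le_rfl hd0 (by linarith)
  have m1 : a*p*(q*d) ≤ (d*d)*(d*d) := by
    exact mul_le_mul s1 s2 (mul_nonneg hq hd0) (mul_nonneg (by linarith) (by linarith))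
  have hdd2 : d*d ≤ 1 := by nlinarith
  have h4 : d*d*(d*d) ≤ d^2 := by nlinarith
  have h3 : (d*1)*(d*d) ≤ d^2 := by nlinarith
  have m1' : a*p*(q*d) ≤ d^2 := m1.trans h4
  have m1n : 0 ≤ a*p*(q*d) := mul_nonneg (mul_nonneg ha hp) (mul_nonneg hq hd0)
  have s3 : a*c ≤ d*1 := mul_le_mul had hc1 hc (by linarith)
  have m2 : a*c*(q*d) ≤ (d*1)*(d*d) := mul_le_mul s3 s2 (mul_nonneg hq hd0) (by nlinarith)
  have m2' : a*c*(q*d) ≤ d^2 := m2.trans h3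
  have m2n : 0 ≤ a*c*(q*d) := mul_nonneg (mul_nonneg ha hc) (mul_nonneg hq hd0)
  have s4 : p*d ≤ d*d := mul_le_mul hpd le_rfl hd0 (by linarith)
  have m3 : a*c*(p*d) ≤ (d*1)*(d*d) := mul_le_mul s3 s4 (mul_nonneg hp hd0) (by nlinarith)
  have m3' : a*c*(p*d) ≤ d^2 := m3.trans h3
  have m3n : 0 ≤ a*c*(p*d) := mul_nonneg (mul_nonneg ha hc) (mul_nonneg hp hd0)
  have s5 : p*q ≤ d*d := mul_le_mul hpd hqd hq (by linarith)
  have m4 : a*c*(p*q) ≤ (d*1)*(d*d) := mul_le_mul s3 s5 (mul_nonneg hp hq) (by nlinarith)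
  have m4' : a*c*(p*q) ≤ d^2 := m4.trans h3
  have m4n : 0 ≤ a*c*(p*q) := mul_nonneg (mul_nonneg ha hc) (mul_nonneg hp hq)
  rw [abs_le]
  constructor <;> nlinarith

lemma bound2 {x : E3} (ha : 0 ≤ x 0) (hb : 0 ≤ x 1) (hc : 0 ≤ x 2)
    (hax : x 0 ≤ 1 - x 2) (hbx : x 1 ≤ 1 - x 2) (hd : 0 < 1 - x 2) : |c2 x| ≤ 4 := by
  rw [c2, abs_div, abs_of_pos (by positivity : (0:ℝ) < (1 - x 2)^2),
    div_le_iff₀ (by positivity)]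
  have h := aux (x 0) (x 2) (-(x 0 + x 2 - 1)) (-(x 1 + x 2 - 1)) (1 - x 2)
    ha hax hc (by linarith) (by linarith) (by linarith) (by linarith) (by linarith) hd (by linarith)
  calc |x 0 * ((x 0 + x 2 - 1)*(x 1 + x 2 - 1) + x 2*(x 1 + x 2 - 1) + x 2*(x 0 + x 2 - 1)) * (1 - x 2)
        + x 0 * x 2 * (x 0 + x 2 - 1) * (x 1 + x 2 - 1)|
      = |x 0 * ((-(x 0 + x 2 - 1))*(-(x 1 + x 2 - 1)) - x 2*(-(x 1 + x 2 - 1)) - x 2*(-(x 0 + x 2 - 1))) * (1 - x 2)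
        + x 0 * x 2 * ((-(x 0 + x 2 - 1))*(-(x 1 + x 2 - 1)))| := by ring_nf
    _ ≤ 4 * (1 - x 2)^2 := by
        rw [show x 0 * x 2 * ((-(x 0 + x 2 - 1))*(-(x 1 + x 2 - 1)))
            = x 0 * x 2 * (-(x 0 + x 2 - 1)) * (-(x 1 + x 2 - 1)) from by ring] at h ⊢
        exact h

lemma uFun_abs_le {x : E3} (ha : 0 ≤ x 0) (hb : 0 ≤ x 1) (hc : 0 ≤ x 2)
    (hax : x 0 ≤ 1 - x 2) (hbx : x 1 ≤ 1 - x 2) (hd : 0 < 1 - x 2) : |uFun x| ≤ 1 := by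
  rw [uFun, abs_div, abs_of_pos hd, div_le_one hd]
  have h1 : |x 0 * x 2| ≤ 1 := by
    rw [abs_of_nonneg (mul_nonneg ha hc)]; nlinarith
  have h2 : |x 0 + x 2 - 1| ≤ 1 - x 2 := by rw [abs_le]; constructor <;> linarith
  have h3 : |x 1 + x 2 - 1| ≤ 1 - x 2 := by rw [abs_le]; constructor <;> linarith
  rw [abs_mul, abs_mul]
  nlinarith [abs_nonneg (x 0 * x 2), abs_nonneg (x 0 + x 2 - 1), abs_nonneg (x 1 + x 2 - 1),
    mul_le_mul h2 h3 (abs_nonneg _) (by linarith)]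

lemma coord_le_norm (v : E3) (i : Fin 3) : |v i| ≤ ‖v‖ := by
  rw [EuclideanSpace.norm_eq]
  refine le_trans (le_of_eq (Real.sqrt_sq_eq_abs (v i)).symm) ?_
  apply Real.sqrt_le_sqrt
  have := Finset.single_le_sum (f := fun j => ‖v j‖^2) (fun j _ => by positivity)
    (Finset.mem_univ i)
  simpa [sq_abs] using this

lemma opnorm_le (x : E3) :
    ‖c0 x • P 0 + c1 x • P 1 + c2 x • P 2‖ ≤ |c0 x| + |c1 x| + |c2 x| := by
  refine ContinuousLinearMap.opNorm_le_bound _ (by positivity) fun v => ?_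
  have hv0 := coord_le_norm v 0
  have hv1 := coord_le_norm v 1
  have hv2 := coord_le_norm v 2
  simp only [ContinuousLinearMap.add_apply, ContinuousLinearMap.smul_apply,
    PiLp.proj_apply, smul_eq_mul, Real.norm_eq_abs]
  calc |c0 x * v 0 + c1 x * v 1 + c2 x * v 2|
      ≤ |c0 x * v 0 + c1 x * v 1| + |c2 x * v 2| := abs_add_le _ _
    _ ≤ |c0 x * v 0| + |c1 x * v 1| + |c2 x * v 2| := by
        have := abs_add_le (c0 x * v 0) (c1 x * v 1); linarith
    _ = |c0 x| * |v 0| + |c1 x| * |v 1| + |c2 x| * |v 2| := by rw [abs_mul, abs_mul, abs_mul]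
    _ ≤ (|c0 x| + |c1 x| + |c2 x|) * ‖v‖ := by
        nlinarith [abs_nonneg (c0 x), abs_nonneg (c1 x), abs_nonneg (c2 x),
          abs_nonneg (v 0), abs_nonneg (v 1), abs_nonneg (v 2), norm_nonneg v]

/-- Interior points have strictly positive first coordinate. -/
lemma interior_pos (x : E3) (hx : x ∈ interior Pyr) : 0 < x 0 := by
  rw [mem_interior_iff_mem_nhds, Metric.mem_nhds_iff] at hx
  obtain ⟨ε, hε, hball⟩ := hx
  set y : E3 := x - (ε/2) • EuclideanSpace.single (0 : Fin 3) (1:ℝ) with hy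
  have hyx : dist y x < ε := by
    rw [dist_eq_norm]
    have : y - x = -((ε/2) • EuclideanSpace.single (0 : Fin 3) (1:ℝ)) := by
      rw [hy]; abel
    rw [this, norm_neg, norm_smul, EuclideanSpace.norm_single]
    simp only [Real.norm_eq_abs, norm_one]
    rw [abs_of_pos (by linarith)]
    linarith
  have hyP : y ∈ Pyr := hball hyx
  have hy0 : y 0 = x 0 - ε/2 := by
    rw [hy]
    simp [PiLp.sub_apply, PiLp.smul_apply, EuclideanSpace.single_apply]
  have := hyP.1
  rw [hy0] at this
  linarith

lemma interior_facts (x : E3) (hx : x ∈ interior Pyr) :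
    0 ≤ x 0 ∧ 0 ≤ x 1 ∧ 0 ≤ x 2 ∧ x 0 ≤ 1 - x 2 ∧ x 1 ≤ 1 - x 2 ∧ 0 < 1 - x 2 := by
  have hP : x ∈ Pyr := interior_subset hx
  obtain ⟨ha, hb, hc, hax, hbx⟩ := hP
  have h0 := interior_pos x hx
  exact ⟨ha, hb, hc, hax, hbx, by linarith⟩

lemma pyr_subset_ball : Pyr ⊆ Metric.closedBall (0 : E3) 2 := by
  intro p hp
  obtain ⟨ha, hb, hc, hax, hbx⟩ := hp
  have h0 : |p 0| ≤ 1 := by rw [abs_of_nonneg ha]; linarith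
  have h1 : |p 1| ≤ 1 := by rw [abs_of_nonneg hb]; linarith
  have h2 : |p 2| ≤ 1 := by
    rw [abs_of_nonneg hc]; linarith
  rw [Metric.mem_closedBall, dist_zero_right, EuclideanSpace.norm_eq]
  have hsum : ∑ i, ‖p i‖^2 ≤ 4 := by
    rw [Fin.sum_univ_three]
    simp only [Real.norm_eq_abs]
    nlinarith [abs_nonneg (p 0), abs_nonneg (p 1), abs_nonneg (p 2)]
  calc Real.sqrt (∑ i, ‖p i‖^2) ≤ Real.sqrt 4 := Real.sqrt_le_sqrt hsum
    _ = 2 := by rw [show (4:ℝ) = 2^2 by norm_num, Real.sqrt_sq (by norm_num)]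

lemma measure_interior_ne_top : volume (interior Pyr) ≠ ⊤ := by
  have h : volume (interior Pyr) ≤ volume (Metric.closedBall (0 : E3) 2) :=
    measure_mono (interior_subset.trans pyr_subset_ball)
  exact (h.trans_lt measure_closedBall_lt_top).ne

lemma uFun_measurable : Measurable uFun := by
  unfold uFun; fun_prop

end UFunAux

open UFunAux
/-- `u ∈ H¹(Ω)`: `u` is differentiable on the interior `Ω°`, `u²` is
Lebesgue-integrable on `Ω°`, and the squared Euclidean norm of the gradient of `u`
is Lebesgue-integrable on `Ω°`. -/
theorem uFun_mem_H1 :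
    (∀ x ∈ interior Pyr, DifferentiableAt ℝ uFun x) ∧
    IntegrableOn (fun x => (uFun x) ^ 2) (interior Pyr) volume ∧
    IntegrableOn (fun x => ‖fderiv ℝ uFun x‖ ^ 2) (interior Pyr) volume := by
  have hfacts := interior_facts
  have hdiff : ∀ x ∈ interior Pyr, DifferentiableAt ℝ uFun x := by
    intro x hx
    obtain ⟨ha, hb, hc, hax, hbx, hd⟩ := hfacts x hx
    exact (key x (by linarith)).differentiableAt
  refine ⟨hdiff, ?_, ?_⟩
  · refine Measure.integrableOn_of_bounded measure_interior_ne_top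
      ((uFun_measurable.pow_const 2).aestronglyMeasurable) (M := 1) ?_
    rw [ae_restrict_iff' isOpen_interior.measurableSet]
    refine Filter.Eventually.of_forall fun x hx => ?_
    obtain ⟨ha, hb, hc, hax, hbx, hd⟩ := hfacts x hx
    have h := uFun_abs_le ha hb hc hax hbx hd
    rw [Real.norm_eq_abs, abs_of_nonneg (by positivity : (0:ℝ) ≤ uFun x ^ 2)]
    nlinarith [abs_nonneg (uFun x), sq_abs (uFun x)]
  · refine Measure.integrableOn_of_bounded measure_interior_ne_top
      (((measurable_fderiv ℝ uFun).norm.pow_const 2).aestronglyMeasurable) (M := 36) ?_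
    rw [ae_restrict_iff' isOpen_interior.measurableSet]
    refine Filter.Eventually.of_forall fun x hx => ?_
    obtain ⟨ha, hb, hc, hax, hbx, hd⟩ := hfacts x hx
    have hkey := key x (by linarith)
    have hfd : fderiv ℝ uFun x = c0 x • P 0 + c1 x • P 1 + c2 x • P 2 := hkey.fderiv
    have hnorm : ‖fderiv ℝ uFun x‖ ≤ 6 := by
      rw [hfd]
      refine (opnorm_le x).trans ?_
      have := bound0 ha hb hc hax hbx hd
      have := bound1 ha hb hc hax hbx hd
      have := bound2 ha hb hc hax hbx hd
      linarith
    rw [Real.norm_eq_abs, abs_of_nonneg (by positivity : (0:ℝ) ≤ ‖fderiv ℝ uFun x‖ ^ 2)]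
    nlinarith [norm_nonneg (fderiv ℝ uFun x)]

end
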